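/- If (1−α)·√(γ² + σ²) < √(2π)·(αγ² + (1−α)σ²), then the wealth-update map f has exactly one fixed point in ℝ (f is a contraction and admits a unique x with f(x) = x). -/

import Mathlib

open Real MeasureTheory

lemma gauss_integrable :
    Integrable (fun t : ℝ => (Real.sqrt (2 * π))⁻¹ * Real.exp (-t ^ 2 / 2)) := by
  have h : Integrable (fun t : ℝ => Real.exp (-(1/2 : ℝ) * t ^ 2)) :=
    integrable_exp_neg_mul_sq (by norm_num)
  have h' : Integrable (fun t : ℝ => Real.exp (-t ^ 2 / 2)) := by
    convert h using 2 with t; ring_nf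
  exact h'.const_mul _

lemma Phi_lipschitz (Φ : ℝ → ℝ)
    (hΦ : ∀ u, Φ u = ∫ t in Set.Iic u, (Real.sqrt (2 * π))⁻¹ * Real.exp (-t ^ 2 / 2)) :
    ∀ u v : ℝ, |Φ u - Φ v| ≤ (Real.sqrt (2 * π))⁻¹ * |u - v| := by
  have key : ∀ u v : ℝ, v ≤ u → |Φ u - Φ v| ≤ (Real.sqrt (2 * π))⁻¹ * |u - v| := by
    intro u v hvu
    rw [hΦ u, hΦ v]
    have hint := gauss_integrable
    rw [intervalIntegral.integral_Iic_sub_Iic hint.integrableOn hint.integrableOn,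
      intervalIntegral.integral_of_le hvu]
    have hle : ∀ t ∈ Set.Ioc v u,
        ‖(Real.sqrt (2 * π))⁻¹ * Real.exp (-t ^ 2 / 2)‖ ≤ (Real.sqrt (2 * π))⁻¹ := by
      intro t _
      rw [Real.norm_eq_abs, abs_mul, abs_of_nonneg (inv_nonneg.2 (Real.sqrt_nonneg _)),
        abs_of_pos (Real.exp_pos _)]
      have h1 : Real.exp (-t ^ 2 / 2) ≤ 1 := by
        rw [Real.exp_le_one_iff]
        nlinarith [sq_nonneg t]
      nlinarith [inv_nonneg.2 (Real.sqrt_nonneg (2 * π))]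
    have := norm_setIntegral_le_of_norm_le_const (μ := volume) (s := Set.Ioc v u)
      (C := (Real.sqrt (2 * π))⁻¹) (by simp [measure_Ioc_lt_top]) hle
    rw [measureReal_def, Real.volume_Ioc, ENNReal.toReal_ofReal (by linarith)] at this
    calc |∫ t in Set.Ioc v u, (Real.sqrt (2 * π))⁻¹ * Real.exp (-t ^ 2 / 2)|
        ≤ (Real.sqrt (2 * π))⁻¹ * (u - v) := this
      _ = (Real.sqrt (2 * π))⁻¹ * |u - v| := by rw [abs_of_nonneg (by linarith)]
  intro u v
  rcases le_total v u with h | h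
  · exact key u v h
  · have := key v u h
    rw [abs_sub_comm (Φ u) (Φ v), abs_sub_comm u v]
    exact this

/-- if `(1-α)√(γ²+σ²) < √(2π)(αγ² + (1-α)σ²)` then the wealth-update map
`f(x) = 1 - Φ(K(C - (1-α)x))` is a contraction and has exactly one fixed point. -/
theorem unique_fixed_point_of_contraction
    (γ σ C α : ℝ) (hγ : 0 < γ) (hσ : 0 < σ) (hα : α ∈ Set.Ico (0 : ℝ) 1)
    (Φ : ℝ → ℝ)
    (hΦ : ∀ u, Φ u = ∫ t in Set.Iic u, (Real.sqrt (2 * π))⁻¹ * Real.exp (-t ^ 2 / 2))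
    (K : ℝ) (hK : K = Real.sqrt (γ ^ 2 + σ ^ 2) / (α * γ ^ 2 + (1 - α) * σ ^ 2))
    (f : ℝ → ℝ) (hf : f = fun x => 1 - Φ (K * (C - (1 - α) * x)))
    (hcontr : (1 - α) * Real.sqrt (γ ^ 2 + σ ^ 2)
        < Real.sqrt (2 * π) * (α * γ ^ 2 + (1 - α) * σ ^ 2)) :
    ∃! x : ℝ, f x = x := by
  obtain ⟨hα0, hα1⟩ := hα
  have hD : 0 < α * γ ^ 2 + (1 - α) * σ ^ 2 := by nlinarith [mul_nonneg hα0 (sq_nonneg γ), mul_pos (sub_pos.2 hα1) (pow_pos hσ 2)]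
  have hsqrtpi : 0 < Real.sqrt (2 * π) := Real.sqrt_pos.2 (by positivity)
  have hKpos : 0 ≤ K := by
    rw [hK]; positivity
  set L : ℝ := (1 - α) * K * (Real.sqrt (2 * π))⁻¹ with hL
  have hLnn : 0 ≤ L := mul_nonneg (mul_nonneg (by linarith) hKpos) (inv_nonneg.2 hsqrtpi.le)
  have hL1 : L < 1 := by
    rw [hL, hK]
    have heq : (1 - α) * (Real.sqrt (γ ^ 2 + σ ^ 2) / (α * γ ^ 2 + (1 - α) * σ ^ 2))
        * (Real.sqrt (2 * π))⁻¹
        = ((1 - α) * Real.sqrt (γ ^ 2 + σ ^ 2))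
          / (Real.sqrt (2 * π) * (α * γ ^ 2 + (1 - α) * σ ^ 2)) := by
      rw [div_eq_mul_inv, div_eq_mul_inv, mul_inv]
      ring
    rw [heq, div_lt_one (mul_pos hsqrtpi hD)]
    exact hcontr
  have hlip : LipschitzWith ⟨L, hLnn⟩ f := by
    apply LipschitzWith.of_dist_le_mul
    intro x y
    rw [hf]
    simp only [Real.dist_eq]
    have h1 : (1 - Φ (K * (C - (1 - α) * x))) - (1 - Φ (K * (C - (1 - α) * y)))
        = -(Φ (K * (C - (1 - α) * x)) - Φ (K * (C - (1 - α) * y))) := by ring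
    rw [h1, abs_neg]
    calc |Φ (K * (C - (1 - α) * x)) - Φ (K * (C - (1 - α) * y))|
        ≤ (Real.sqrt (2 * π))⁻¹ * |K * (C - (1 - α) * x) - K * (C - (1 - α) * y)| :=
          Phi_lipschitz Φ hΦ _ _
      _ = (Real.sqrt (2 * π))⁻¹ * (K * ((1 - α) * |x - y|)) := by
          rw [show K * (C - (1 - α) * x) - K * (C - (1 - α) * y)
              = K * ((1 - α) * (y - x)) by ring]
          rw [abs_mul, abs_mul, abs_of_nonneg hKpos, abs_of_nonneg (by linarith),
            abs_sub_comm y x]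
      _ = L * |x - y| := by rw [hL]; ring
  have hcontra : ContractingWith ⟨L, hLnn⟩ f := ⟨by exact_mod_cast hL1, hlip⟩
  refine ⟨hcontra.fixedPoint f, hcontra.fixedPoint_isFixedPt, fun y hy => ?_⟩
  exact hcontra.fixedPoint_unique hy
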